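/- Let d ≥ 1, λ ≥ 0, K ≥ 0, and let φ : ℝ^d → ℝ be K-Lipschitz and λ-concave. Fix t > 0 and set ψ_t(y) = ‖y‖²/2 + t·φ(y), with Legendre transform ψ_t*(x) = sup_{y} (⟨x,y⟩ − ψ_t(y)) and biconjugate ψ_t**(y) = sup_{x} (⟨x,y⟩ − ψ_t*(x)). Then: (a) ψ_t** is differentiable on ℝ^d and its gradient T_t := ∇ψ_t** is continuous; (b) T_t : ℝ^d → ℝ^d is surjective; (c) for all x, y ∈ ℝ^d one has T_t(y) = x if and only if y ∈ ∂ψ_t*(x); (d) ‖T_t(y₁) − T_t(y₂)‖ ≤ (1+λt)‖y₁ − y₂‖ for all y₁, y₂ ∈ ℝ^d. -/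

import Mathlib

open scoped RealInnerProductSpace
noncomputable section

/-- Legendre transform: `f*(x) = sup_y (⟨x,y⟩ − f(y))`. -/
def conj {d : ℕ} (f : EuclideanSpace ℝ (Fin d) → ℝ)
    (x : EuclideanSpace ℝ (Fin d)) : ℝ :=
  ⨆ y : EuclideanSpace ℝ (Fin d), (⟪x, y⟫ - f y)

/-- `ψ_t(y) = ‖y‖²/2 + t φ(y)`. -/
def psiFun {d : ℕ} (φ : EuclideanSpace ℝ (Fin d) → ℝ) (t : ℝ)
    (y : EuclideanSpace ℝ (Fin d)) : ℝ :=
  ‖y‖ ^ 2 / 2 + t * φ y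

variable {d : ℕ}

local notation "E" => EuclideanSpace ℝ (Fin d)

lemma expand_norm_sub_smul (x y : E) (c : ℝ) :
    ‖x - c • y‖ ^ 2 = ‖x‖ ^ 2 - 2 * (c * ⟪x, y⟫) + c ^ 2 * ‖y‖ ^ 2 := by
  rw [norm_sub_sq_real, real_inner_smul_right, norm_smul]
  simp [mul_pow, sq_abs]

lemma combo_norm_sq (a b : ℝ) (hab : a + b = 1) (x y : E) :
    ‖a • x + b • y‖ ^ 2 = a * ‖x‖ ^ 2 + b * ‖y‖ ^ 2 - a * b * ‖x - y‖ ^ 2 := by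
  have h1 : ‖a • x + b • y‖ ^ 2 = a^2 * ‖x‖^2 + 2*(a*b*⟪x,y⟫) + b^2*‖y‖^2 := by
    rw [norm_add_sq_real, real_inner_smul_left, real_inner_smul_right, norm_smul, norm_smul]
    simp [mul_pow, sq_abs]; ring
  have hb : b = 1 - a := by linarith
  subst hb
  rw [h1, norm_sub_sq_real]; ring

lemma cauchy (x y : E) : ⟪x, y⟫ ≤ ‖x‖ * ‖y‖ := real_inner_le_norm x y

variable {φ : EuclideanSpace ℝ (Fin d) → ℝ} {lam K t : ℝ}

lemma term_le (hK : 0 ≤ K) (hLip : ∀ y z, |φ y - φ z| ≤ K * ‖y - z‖) (ht : 0 < t)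
    (x y : E) : ⟪x, y⟫ - psiFun φ t y ≤ (‖x‖ + t*K)^2/2 - t * φ 0 := by
  have h1 : |φ y - φ 0| ≤ K * ‖y‖ := by simpa using hLip y 0
  have h2 : -(K * ‖y‖) ≤ φ y - φ 0 := (abs_le.1 h1).1
  have h3 : ⟪x, y⟫ ≤ ‖x‖ * ‖y‖ := real_inner_le_norm x y
  have h4 : 0 ≤ ‖y‖ := norm_nonneg y
  unfold psiFun
  nlinarith [sq_nonneg (‖x‖ + t*K - ‖y‖), mul_le_mul_of_nonneg_left h2 ht.le]

lemma bdd_conj (hK : 0 ≤ K) (hLip : ∀ y z, |φ y - φ z| ≤ K * ‖y - z‖) (ht : 0 < t)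
    (x : E) : BddAbove (Set.range fun y : E => ⟪x, y⟫ - psiFun φ t y) := by
  refine ⟨(‖x‖ + t*K)^2/2 - t * φ 0, ?_⟩
  rintro r ⟨y, rfl⟩
  exact term_le hK hLip ht x y

lemma le_conj (hK : 0 ≤ K) (hLip : ∀ y z, |φ y - φ z| ≤ K * ‖y - z‖) (ht : 0 < t)
    (x y : E) : ⟪x, y⟫ - psiFun φ t y ≤ conj (psiFun φ t) x :=
  le_ciSup (bdd_conj hK hLip ht x) y

lemma conj_le (hK : 0 ≤ K) (hLip : ∀ y z, |φ y - φ z| ≤ K * ‖y - z‖) (ht : 0 < t)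
    (x : E) : conj (psiFun φ t) x ≤ (‖x‖ + t*K)^2/2 - t * φ 0 :=
  ciSup_le (term_le hK hLip ht x)

lemma conj_lower (hK : 0 ≤ K) (hLip : ∀ y z, |φ y - φ z| ≤ K * ‖y - z‖) (ht : 0 < t)
    (x : E) : ‖x‖^2/2 - t*K*‖x‖ - t*φ 0 ≤ conj (psiFun φ t) x := by
  have h := le_conj hK hLip ht x x
  have h1 : |φ x - φ 0| ≤ K * ‖x‖ := by simpa using hLip x 0
  have h2 : φ x - φ 0 ≤ K * ‖x‖ := (abs_le.1 h1).2
  have h3 : ⟪x, x⟫ = ‖x‖^2 := real_inner_self_eq_norm_sq x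
  have hps : psiFun φ t x = ‖x‖^2/2 + t*φ x := rfl
  rw [hps, h3] at h
  nlinarith [mul_le_mul_of_nonneg_left h2 ht.le]

lemma ident_aux (hc : (0:ℝ) < 1 + lam*t) (u v : E) :
    ⟪u, v⟫ - psiFun φ t v - ‖u‖^2/(2*(1+lam*t)) =
      t*(lam/2*‖v‖^2 - φ v) - ‖u - (1+lam*t) • v‖^2/(2*(1+lam*t)) := by
  rw [expand_norm_sub_smul]
  unfold psiFun
  field_simp [show (1 + t*lam) ≠ 0 by linarith]
  ring

lemma N_convex (ht : 0 < t)
    (hConc : ConcaveOn ℝ Set.univ (fun y => φ y - lam / 2 * ‖y‖ ^ 2)) :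
    ConvexOn ℝ Set.univ (fun y : E => t*(lam/2*‖y‖^2 - φ y)) := by
  have h1 := (hConc.neg).smul ht.le
  convert h1 using 2 with y
  case e'_12 => simp [smul_eq_mul]
  all_goals rfl

lemma S_convex (hlam : 0 ≤ lam) (hK : 0 ≤ K)
    (hLip : ∀ y z, |φ y - φ z| ≤ K * ‖y - z‖) (ht : 0 < t)
    (hConc : ConcaveOn ℝ Set.univ (fun y => φ y - lam / 2 * ‖y‖ ^ 2)) :
    ConvexOn ℝ Set.univ
      (fun x : E => conj (psiFun φ t) x - ‖x‖^2/(2*(1+lam*t))) := by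
  have hc : (0:ℝ) < 1 + lam*t := by nlinarith
  set c : ℝ := 1 + lam*t with hcdef
  have hN := N_convex ht hConc
  refine ⟨convex_univ, ?_⟩
  intro x₁ _ x₂ _ a b ha hb hab
  set x : E := a • x₁ + b • x₂ with hx
  simp only [smul_eq_mul]
  rw [sub_le_iff_le_add]
  have key : ∀ y : E, ⟪x, y⟫ - psiFun φ t y ≤
      a * (conj (psiFun φ t) x₁ - ‖x₁‖^2/(2*c)) +
      b * (conj (psiFun φ t) x₂ - ‖x₂‖^2/(2*c)) + ‖x‖^2/(2*c) := by
    intro y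
    set y₁ : E := y + c⁻¹ • (x₁ - x) with hy₁
    set y₂ : E := y + c⁻¹ • (x₂ - x) with hy₂
    have hzero : a • (x₁ - x) + b • (x₂ - x) = 0 := by
      have h1 : a • (x₁ - x) + b • (x₂ - x) = x - (a+b) • x := by
        rw [hx]; module
      rw [h1, hab, one_smul, sub_self]
    have hcomb : a • y₁ + b • y₂ = y := by
      have expand : a • y₁ + b • y₂ =
          (a+b) • y + c⁻¹ • (a • (x₁ - x) + b • (x₂ - x)) := by
        rw [hy₁, hy₂]; module
      rw [expand, hzero, smul_zero, add_zero, hab, one_smul]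
    have hn1 : x₁ - c • y₁ = x - c • y := by
      rw [hy₁, smul_add, smul_smul, mul_inv_cancel₀ hc.ne', one_smul]; abel
    have hn2 : x₂ - c • y₂ = x - c • y := by
      rw [hy₂, smul_add, smul_smul, mul_inv_cancel₀ hc.ne', one_smul]; abel
    have e0 := ident_aux (φ := φ) (lam := lam) (t := t) hc x y
    have e1 := ident_aux (φ := φ) (lam := lam) (t := t) hc x₁ y₁
    have e2 := ident_aux (φ := φ) (lam := lam) (t := t) hc x₂ y₂
    rw [hn1] at e1
    rw [hn2] at e2
    have hNc : t*(lam/2*‖y‖^2 - φ y) ≤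
        a * (t*(lam/2*‖y₁‖^2 - φ y₁)) + b * (t*(lam/2*‖y₂‖^2 - φ y₂)) := by
      have := hN.2 (Set.mem_univ y₁) (Set.mem_univ y₂) ha hb hab
      rw [hcomb] at this
      simpa using this
    have f1 : ⟪x₁, y₁⟫ - psiFun φ t y₁ ≤ conj (psiFun φ t) x₁ :=
      le_conj hK hLip ht x₁ y₁
    have f2 : ⟪x₂, y₂⟫ - psiFun φ t y₂ ≤ conj (psiFun φ t) x₂ :=
      le_conj hK hLip ht x₂ y₂
    have g1 : a * (t*(lam/2*‖y₁‖^2 - φ y₁) - ‖x - c•y‖^2/(2*c)) ≤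
        a * (conj (psiFun φ t) x₁ - ‖x₁‖^2/(2*c)) := by
      apply mul_le_mul_of_nonneg_left _ ha
      linarith [e1, f1]
    have g2 : b * (t*(lam/2*‖y₂‖^2 - φ y₂) - ‖x - c•y‖^2/(2*c)) ≤
        b * (conj (psiFun φ t) x₂ - ‖x₂‖^2/(2*c)) := by
      apply mul_le_mul_of_nonneg_left _ hb
      linarith [e2, f2]
    have hBsplit : ‖x - c•y‖^2/(2*c) =
        a * (‖x - c•y‖^2/(2*c)) + b * (‖x - c•y‖^2/(2*c)) := by
      rw [← add_mul, hab, one_mul]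
    linarith [g1, g2, e0, hNc, hBsplit]
  have hsup : conj (psiFun φ t) x ≤
      a * (conj (psiFun φ t) x₁ - ‖x₁‖^2/(2*c)) +
      b * (conj (psiFun φ t) x₂ - ‖x₂‖^2/(2*c)) + ‖x‖^2/(2*c) := by
    rw [show conj (psiFun φ t) x = ⨆ y : E, (⟪x, y⟫ - psiFun φ t y) from rfl]
    exact ciSup_le key
  linarith

lemma q_convex (c : ℝ) (hc : 0 < c) :
    ConvexOn ℝ Set.univ (fun x : E => ‖x‖^2/(2*c)) := by
  refine ⟨convex_univ, ?_⟩
  intro x _ y _ a b ha hb hab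
  simp only [smul_eq_mul]
  have h := combo_norm_sq a b hab x y
  have hn : 0 ≤ a*b*‖x-y‖^2 := by positivity
  rw [h]
  have heq : a * (‖x‖^2/(2*c)) + b * (‖y‖^2/(2*c)) =
      (a*‖x‖^2 + b*‖y‖^2)/(2*c) := by field_simp
  rw [heq]
  gcongr
  linarith

lemma f_convex (hlam : 0 ≤ lam) (hK : 0 ≤ K)
    (hLip : ∀ y z, |φ y - φ z| ≤ K * ‖y - z‖) (ht : 0 < t)
    (hConc : ConcaveOn ℝ Set.univ (fun y => φ y - lam / 2 * ‖y‖ ^ 2)) :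
    ConvexOn ℝ Set.univ (conj (psiFun φ t)) := by
  have hc : (0:ℝ) < 1 + lam*t := by nlinarith
  have h := (S_convex hlam hK hLip ht hConc).add (q_convex (1+lam*t) hc)
  have hfun : conj (psiFun φ t) =
      (fun x : E => conj (psiFun φ t) x - ‖x‖^2/(2*(1+lam*t))) +
      (fun x : E => ‖x‖^2/(2*(1+lam*t))) := by
    funext x; simp
  rw [hfun]; exact h

lemma f_continuous (hlam : 0 ≤ lam) (hK : 0 ≤ K)
    (hLip : ∀ y z, |φ y - φ z| ≤ K * ‖y - z‖) (ht : 0 < t)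
    (hConc : ConcaveOn ℝ Set.univ (fun y => φ y - lam / 2 * ‖y‖ ^ 2)) :
    Continuous (conj (psiFun φ t)) := by
  have h := (f_convex hlam hK hLip ht hConc).continuousOn isOpen_univ
  rw [← continuousOn_univ]; exact h

lemma exists_subgradient (f : E → ℝ) (hconv : ConvexOn ℝ Set.univ f)
    (hcont : Continuous f) (x : E) : ∃ y : E, ∀ z, f x + ⟪y, z - x⟫ ≤ f z := by
  classical
  set s : Set ((EuclideanSpace ℝ (Fin d)) × ℝ) := {p | f p.1 < p.2} with hs
  have hsopen : IsOpen s := isOpen_lt (hcont.comp continuous_fst) continuous_snd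
  have hsconv : Convex ℝ s := by
    intro p hp q hq a b ha hb hab
    simp only [hs, Set.mem_setOf_eq] at hp hq ⊢
    have h1 : f (a • p.1 + b • q.1) ≤ a * f p.1 + b * f q.1 := by
      simpa using hconv.2 (Set.mem_univ p.1) (Set.mem_univ q.1) ha hb hab
    have h2 : a * f p.1 + b * f q.1 < a * p.2 + b * q.2 := by
      by_cases haz : a = 0
      · have hb1 : b = 1 := by linarith
        simp only [haz, hb1, zero_mul, one_mul, zero_add]
        exact hq
      · have ha' : 0 < a := lt_of_le_of_ne ha (Ne.symm haz)
        have := mul_lt_mul_of_pos_left hp ha'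
        have := mul_le_mul_of_nonneg_left hq.le hb
        linarith
    have hfst : (a • p + b • q).1 = a • p.1 + b • q.1 := rfl
    have hsnd : (a • p + b • q).2 = a * p.2 + b * q.2 := rfl
    rw [hfst, hsnd]
    exact lt_of_le_of_lt h1 h2
  have hxs : (x, f x) ∉ s := by simp [hs]
  obtain ⟨L, hL⟩ := geometric_hahn_banach_open_point hsconv hsopen hxs
  have hβ : L (0, 1) < 0 := by
    have h := hL (x, f x + 1) (by simp [hs])
    have heq : ((x, f x + 1) : (EuclideanSpace ℝ (Fin d)) × ℝ) = (x, f x) + (0, 1) := by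
      simp [Prod.ext_iff]
    rw [heq, map_add] at h
    linarith
  have hz : ∀ z : EuclideanSpace ℝ (Fin d), L (z, f z) ≤ L (x, f x) := by
    intro z
    by_contra hcon
    push_neg at hcon
    set ε : ℝ := (L (z, f z) - L (x, f x)) / (-L (0,1)) with hε
    have hε0 : 0 < ε := div_pos (by linarith) (by linarith)
    have h := hL (z, f z + ε) (by simp [hs, hε0])
    have heq : ((z, f z + ε) : (EuclideanSpace ℝ (Fin d)) × ℝ) =
        (z, f z) + ε • ((0:EuclideanSpace ℝ (Fin d)), (1:ℝ)) := by
      simp [Prod.ext_iff]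
    rw [heq, map_add, map_smul, smul_eq_mul] at h
    have hmul : ε * L (0,1) = -(L (z, f z) - L (x, f x)) := by
      rw [hε]
      field_simp [neg_ne_zero.mpr (ne_of_lt hβ)]
      rw [div_self hβ.ne]
    rw [hmul] at h
    linarith
  set m : EuclideanSpace ℝ (Fin d) →L[ℝ] ℝ :=
    L.comp (ContinuousLinearMap.inl ℝ (EuclideanSpace ℝ (Fin d)) ℝ) with hm
  have hdecomp : ∀ (z : EuclideanSpace ℝ (Fin d)) (r : ℝ),
      L (z, r) = m z + r * L (0, 1) := by
    intro z r
    have heq : ((z, r) : (EuclideanSpace ℝ (Fin d)) × ℝ) =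
        (z, 0) + r • ((0:EuclideanSpace ℝ (Fin d)), (1:ℝ)) := by
      simp [Prod.ext_iff]
    rw [heq, map_add, map_smul, smul_eq_mul]
    rfl
  refine ⟨(InnerProductSpace.toDual ℝ (EuclideanSpace ℝ (Fin d))).symm
    ((-L (0,1))⁻¹ • m), fun z => ?_⟩
  rw [InnerProductSpace.toDual_symm_apply]
  have h1 := hz z
  rw [hdecomp z (f z), hdecomp x (f x)] at h1
  have happ : ((-L (0,1))⁻¹ • m) (z - x) = (m z - m x) / (-L (0,1)) := by
    simp [map_sub, div_eq_inv_mul]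
    ring
  rw [happ, ← le_sub_iff_add_le']
  rw [div_le_iff₀ (by linarith : (0:ℝ) < -L (0,1))]
  nlinarith [h1]

lemma exists_min (hlam : 0 ≤ lam) (hK : 0 ≤ K)
    (hLip : ∀ y z, |φ y - φ z| ≤ K * ‖y - z‖) (ht : 0 < t)
    (hConc : ConcaveOn ℝ Set.univ (fun y => φ y - lam / 2 * ‖y‖ ^ 2))
    (y : E) : ∃ x : E, ∀ z : E,
      conj (psiFun φ t) x - ⟪y, x⟫ ≤ conj (psiFun φ t) z - ⟪y, z⟫ := by
  set G : E → ℝ := fun z => conj (psiFun φ t) z - ⟪y, z⟫ with hG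
  have hGcont : Continuous G :=
    (f_continuous hlam hK hLip ht hConc).sub
      (Continuous.inner continuous_const continuous_id)
  set A : ℝ := t*K + ‖y‖ with hA
  have hA0 : 0 ≤ A := by positivity
  set s : ℝ := Real.sqrt (|t * φ 0| + |G 0|) with hsq
  have hs0 : 0 ≤ s := Real.sqrt_nonneg _
  have hs2 : s^2 = |t * φ 0| + |G 0| :=
    Real.sq_sqrt (by positivity)
  set R : ℝ := 4*A + 2*s + 2 with hR
  have hR0 : 0 ≤ R := by positivity
  have hout : ∀ z : E, R ≤ ‖z‖ → G 0 + 1 ≤ G z := by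
    intro z hz
    have hlow := conj_lower hK hLip ht z
    have hyz : ⟪y, z⟫ ≤ ‖y‖ * ‖z‖ := real_inner_le_norm y z
    have h1 : ‖z‖^2/2 - A*‖z‖ - t*φ 0 ≤ G z := by
      rw [hG]
      simp only
      nlinarith [hlow, hyz]
    have h2 : t * φ 0 ≤ |t * φ 0| := le_abs_self _
    have h3 : G 0 ≤ |G 0| := le_abs_self _
    have hr1 : (4*A+2*s+2) * (2*A + 2*s + 2) ≤ ‖z‖ * (‖z‖ - 2*A) := by
      apply mul_le_mul (by rw [hR] at hz; linarith) (by rw [hR] at hz; linarith)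
        (by positivity) (norm_nonneg z)
    clear_value A s R G
    nlinarith [h1, hr1, hs2, hs0, hA0, h2, h3, mul_nonneg hA0 hs0, sq_nonneg A,
      sq_nonneg s]
  obtain ⟨x₀, hx₀mem, hx₀min⟩ := (isCompact_closedBall (0:E) R).exists_isMinOn
    ⟨0, by simp [hR0]⟩ hGcont.continuousOn
  refine ⟨x₀, fun z => ?_⟩
  show G x₀ ≤ G z
  by_cases hz : z ∈ Metric.closedBall (0:E) R
  · exact isMinOn_iff.mp hx₀min z hz
  · have hznorm : R ≤ ‖z‖ := by
      rw [Metric.mem_closedBall, dist_zero_right] at hz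
      linarith [not_le.mp hz]
    have h0ball : (0:E) ∈ Metric.closedBall (0:E) R := by simp [hR0]
    have := isMinOn_iff.mp hx₀min 0 h0ball
    linarith [hout z hznorm]

lemma quad_growth (hlam : 0 ≤ lam) (hK : 0 ≤ K)
    (hLip : ∀ y z, |φ y - φ z| ≤ K * ‖y - z‖) (ht : 0 < t)
    (hConc : ConcaveOn ℝ Set.univ (fun y => φ y - lam / 2 * ‖y‖ ^ 2))
    (y xs : E)
    (hmin : ∀ w : E, conj (psiFun φ t) xs - ⟪y, xs⟫ ≤ conj (psiFun φ t) w - ⟪y, w⟫)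
    (z : E) :
    conj (psiFun φ t) xs - ⟪y, xs⟫ + ‖z - xs‖^2/(2*(1+lam*t)) ≤
      conj (psiFun φ t) z - ⟪y, z⟫ := by
  have hc : (0:ℝ) < 1 + lam*t := by nlinarith
  have hS := (S_convex hlam hK hLip ht hConc).2
  set c : ℝ := 1 + lam*t with hcdef
  set G : E → ℝ := fun u => conj (psiFun φ t) u - ⟪y, u⟫ with hGdef
  set S : E → ℝ := fun u => conj (psiFun φ t) u - ‖u‖^2/(2*c) with hSdef
  set D : ℝ := ‖z - xs‖^2/(2*c) with hD
  have hD0 : 0 ≤ D := by positivity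
  have hminG : ∀ w : E, G xs ≤ G w := hmin
  show G xs + D ≤ G z
  clear_value c G S D
  have key : ∀ θ : ℝ, 0 < θ → θ < 1 → G xs + (1-θ)*D ≤ G z := by
    intro θ h0 h1
    set w : E := (1-θ) • xs + θ • z with hw
    have hSw : S w ≤ (1-θ) * S xs + θ * S z := by
      have h5 := hS (Set.mem_univ xs) (Set.mem_univ z)
        (show (0:ℝ) ≤ 1-θ by linarith) (show (0:ℝ) ≤ θ from h0.le)
        (show (1-θ) + θ = 1 by ring)
      simpa [smul_eq_mul, hSdef] using h5
    have hqw : ‖w‖^2 = (1-θ)*‖xs‖^2 + θ*‖z‖^2 - (1-θ)*θ*‖xs - z‖^2 :=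
      combo_norm_sq _ _ (by ring) xs z
    have hinner : ⟪y, w⟫ = (1-θ)*⟪y,xs⟫ + θ*⟪y,z⟫ := by
      rw [hw, inner_add_right, real_inner_smul_right, real_inner_smul_right]
    have hrev : ‖xs - z‖^2 = ‖z - xs‖^2 := by rw [norm_sub_rev]
    have e0 : G w = S w + ‖w‖^2/(2*c) - ⟪y, w⟫ := by
      simp only [hGdef, hSdef]; ring
    have e1 : (1-θ)*(G xs) = (1-θ)*S xs + (1-θ)*(‖xs‖^2/(2*c)) - (1-θ)*⟪y,xs⟫ := by
      simp only [hGdef, hSdef]; ring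
    have e2 : θ*(G z) = θ*S z + θ*(‖z‖^2/(2*c)) - θ*⟪y,z⟫ := by
      simp only [hGdef, hSdef]; ring
    have h2 : G w ≤ (1-θ)*(G xs) + θ*(G z) - θ*(1-θ)*D := by
      have expand : (1-θ)*(G xs) + θ*(G z) - θ*(1-θ)*D =
          ((1-θ)*S xs + θ*S z) +
          ((1-θ)*‖xs‖^2 + θ*‖z‖^2 - (1-θ)*θ*‖z - xs‖^2)/(2*c) -
          ((1-θ)*⟪y,xs⟫ + θ*⟪y,z⟫) := by
        simp only [hGdef, hSdef, hD]; ring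
      rw [expand, e0, hqw, hinner, hrev]
      linarith [hSw]
    have h3 : G xs ≤ (1-θ)*(G xs) + θ*(G z) - θ*(1-θ)*D := le_trans (hminG w) h2
    have h4 : θ*(G xs + (1-θ)*D) ≤ θ*(G z) := by nlinarith [h3]
    exact le_of_mul_le_mul_left h4 h0
  rcases eq_or_lt_of_le hD0 with hDz | hDpos
  · rw [← hDz, add_zero]; exact hminG z
  · by_contra hcon
    push_neg at hcon
    set δ : ℝ := G xs + D - G z with hδ
    have hδ0 : 0 < δ := by linarith
    set θ : ℝ := min (δ/(2*D)) (1/2) with hθ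
    have hθ0 : 0 < θ := lt_min (by positivity) (by norm_num)
    have hθ1 : θ < 1 := lt_of_le_of_lt (min_le_right _ _) (by norm_num)
    have hk := key θ hθ0 hθ1
    have hθD : θ * D ≤ δ/2 := by
      have := min_le_left (δ/(2*D)) (1/2)
      have h5 : θ * D ≤ (δ/(2*D)) * D := mul_le_mul_of_nonneg_right this hD0
      have h6 : (δ/(2*D)) * D = δ/2 := by field_simp
      linarith
    nlinarith [hk]

end

theorem stmt11 (d : ℕ) (hd : 1 ≤ d) (lam K : ℝ) (hlam : 0 ≤ lam) (hK : 0 ≤ K)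
    (φ : EuclideanSpace ℝ (Fin d) → ℝ)
    (hLip : ∀ y z, |φ y - φ z| ≤ K * ‖y - z‖)
    (hConc : ConcaveOn ℝ Set.univ (fun y => φ y - lam / 2 * ‖y‖ ^ 2))
    (t : ℝ) (ht : 0 < t) :
    Differentiable ℝ (conj (conj (psiFun φ t))) ∧
    Continuous (fun y => gradient (conj (conj (psiFun φ t))) y) ∧
    Function.Surjective (fun y => gradient (conj (conj (psiFun φ t))) y) ∧
    (∀ x y : EuclideanSpace ℝ (Fin d),
      gradient (conj (conj (psiFun φ t))) y = x ↔
        ∀ z, conj (psiFun φ t) z ≥ conj (psiFun φ t) x + ⟪y, z - x⟫) ∧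
    (∀ y₁ y₂ : EuclideanSpace ℝ (Fin d),
      ‖gradient (conj (conj (psiFun φ t))) y₁ -
        gradient (conj (conj (psiFun φ t))) y₂‖ ≤ (1 + lam * t) * ‖y₁ - y₂‖) := by
  have hc : (0:ℝ) < 1 + lam*t := by nlinarith
  set f : EuclideanSpace ℝ (Fin d) → ℝ := conj (psiFun φ t) with hf
  have hex : ∀ y : EuclideanSpace ℝ (Fin d), ∃ x : EuclideanSpace ℝ (Fin d),
      ∀ z, f x - ⟪y,x⟫ ≤ f z - ⟪y,z⟫ :=
    exists_min hlam hK hLip ht hConc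
  have hgrow : ∀ (y xs : EuclideanSpace ℝ (Fin d)),
      (∀ w, f xs - ⟪y,xs⟫ ≤ f w - ⟪y,w⟫) →
      ∀ z, f xs - ⟪y, xs⟫ + ‖z - xs‖^2/(2*(1+lam*t)) ≤ f z - ⟪y, z⟫ :=
    fun y xs hm z => quad_growth hlam hK hLip ht hConc y xs hm z
  have hfconv : ConvexOn ℝ Set.univ f := f_convex hlam hK hLip ht hConc
  have hfcont : Continuous f := f_continuous hlam hK hLip ht hConc
  have hsub : ∀ x : EuclideanSpace ℝ (Fin d), ∃ y : EuclideanSpace ℝ (Fin d),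
      ∀ z, f x + ⟪y, z - x⟫ ≤ f z :=
    exists_subgradient f hfconv hfcont
  clear_value f
  choose T hT using hex
  have huniq : ∀ (y x : EuclideanSpace ℝ (Fin d)),
      (∀ z, f x - ⟪y,x⟫ ≤ f z - ⟪y,z⟫) → T y = x := by
    intro y x hx
    have h1 := hgrow y x hx (T y)
    have h2 := hgrow y (T y) (hT y) x
    have h3 : ‖x - T y‖^2 = ‖T y - x‖^2 := by rw [norm_sub_rev]
    rw [h3] at h2
    have hsum : ‖T y - x‖^2 / (2*(1+lam*t)) ≤ 0 := by linarith [h1, h2]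
    have hX : ‖T y - x‖^2 ≤ 0 := by
      by_contra hpos
      push_neg at hpos
      have := div_pos hpos (by nlinarith : (0:ℝ) < 2*(1+lam*t))
      linarith
    have h5 : ‖T y - x‖ = 0 :=
      le_antisymm (by nlinarith [hX, norm_nonneg (T y - x)]) (norm_nonneg _)
    rw [← sub_eq_zero, ← norm_eq_zero]
    exact h5
  have hlipT : ∀ y₁ y₂, ‖T y₁ - T y₂‖ ≤ (1+lam*t)*‖y₁-y₂‖ := by
    intro y₁ y₂
    have h1 := hgrow y₁ (T y₁) (hT y₁) (T y₂)
    have h2 := hgrow y₂ (T y₂) (hT y₂) (T y₁)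
    have hrev : ‖T y₂ - T y₁‖^2 = ‖T y₁ - T y₂‖^2 := by rw [norm_sub_rev]
    have hinner : ⟪y₁ - y₂, T y₁ - T y₂⟫ =
        (⟪y₁, T y₁⟫ - ⟪y₁, T y₂⟫) - (⟪y₂, T y₁⟫ - ⟪y₂, T y₂⟫) := by
      rw [inner_sub_left, inner_sub_right, inner_sub_right]
    rw [hrev] at h1
    have hkey : ‖T y₁ - T y₂‖^2/(1+lam*t) ≤ ⟪y₁ - y₂, T y₁ - T y₂⟫ := by
      rw [hinner]
      have hsplit : ‖T y₁ - T y₂‖^2/(1+lam*t) =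
          ‖T y₁ - T y₂‖^2/(2*(1+lam*t)) + ‖T y₁ - T y₂‖^2/(2*(1+lam*t)) := by
        field_simp
        ring
      rw [hsplit]
      linarith [h1, h2, hrev]
    have hCS : ⟪y₁ - y₂, T y₁ - T y₂⟫ ≤ ‖y₁ - y₂‖ * ‖T y₁ - T y₂‖ :=
      real_inner_le_norm _ _
    rcases eq_or_lt_of_le (norm_nonneg (T y₁ - T y₂)) with h0|h0
    · rw [← h0]; positivity
    · have h5 : ‖T y₁ - T y₂‖^2 ≤ (‖y₁ - y₂‖ * ‖T y₁ - T y₂‖) * (1+lam*t) := by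
        rw [div_le_iff₀ hc] at hkey
        nlinarith [hkey, hCS, hc]
      nlinarith [h5, h0]
  have hboundf : ∀ y x : EuclideanSpace ℝ (Fin d), ⟪y,x⟫ - f x ≤ ⟪y, T y⟫ - f (T y) := by
    intro y x; have := hT y x; linarith
  have hbddf : ∀ y : EuclideanSpace ℝ (Fin d),
      BddAbove (Set.range fun x : EuclideanSpace ℝ (Fin d) => ⟪y,x⟫ - f x) :=
    fun y => ⟨⟪y, T y⟫ - f (T y), by rintro r ⟨x, rfl⟩; exact hboundf y x⟩
  have hconjf : ∀ y : EuclideanSpace ℝ (Fin d), conj f y = ⟪y, T y⟫ - f (T y) := by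
    intro y
    apply le_antisymm
    · exact ciSup_le (hboundf y)
    · exact le_ciSup (hbddf y) (T y)
  have hgradAt : ∀ y : EuclideanSpace ℝ (Fin d), HasGradientAt (conj f) (T y) y := by
    intro y
    rw [hasGradientAt_iff_hasFDerivAt, hasFDerivAt_iff_isLittleO_nhds_zero]
    have hbound : ∀ h : EuclideanSpace ℝ (Fin d),
        |conj f (y+h) - conj f y - ⟪T y, h⟫| ≤ (1+lam*t)*‖h‖^2 := by
      intro h
      have hlow : conj f y + ⟪T y, h⟫ ≤ conj f (y+h) := by
        have h1 : ⟪y+h, T y⟫ - f (T y) ≤ conj f (y+h) := le_ciSup (hbddf (y+h)) (T y)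
        rw [hconjf y]
        have h2 : ⟪y+h, T y⟫ = ⟪y, T y⟫ + ⟪h, T y⟫ := inner_add_left _ _ _
        have h3 : ⟪h, T y⟫ = ⟪T y, h⟫ := real_inner_comm _ _
        linarith
      have hupp : conj f (y+h) ≤ conj f y + ⟪T y, h⟫ + (1+lam*t)*‖h‖^2 := by
        have h1 : ⟪y, T (y+h)⟫ - f (T (y+h)) ≤ conj f y := le_ciSup (hbddf y) (T (y+h))
        rw [hconjf (y+h)]
        have h2 : ⟪y+h, T (y+h)⟫ = ⟪y, T (y+h)⟫ + ⟪h, T (y+h)⟫ := inner_add_left _ _ _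
        have h3 : ⟪h, T (y+h)⟫ = ⟪h, T y⟫ + ⟪h, T (y+h) - T y⟫ := by
          rw [inner_sub_right]; ring
        have h4 : ⟪h, T (y+h) - T y⟫ ≤ ‖h‖ * ‖T (y+h) - T y‖ := real_inner_le_norm _ _
        have h5 : ‖T (y+h) - T y‖ ≤ (1+lam*t)*‖h‖ := by
          have := hlipT (y+h) y
          rwa [add_sub_cancel_left] at this
        have h6 : ⟪h, T y⟫ = ⟪T y, h⟫ := real_inner_comm _ _
        have h7 : ‖h‖ * ‖T (y+h) - T y‖ ≤ ‖h‖ * ((1+lam*t)*‖h‖) :=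
          mul_le_mul_of_nonneg_left h5 (norm_nonneg h)
        nlinarith [h1, h4, h7]
      rw [abs_le]
      constructor
      · nlinarith [hlow, norm_nonneg h, hc, sq_nonneg ‖h‖]
      · nlinarith [hupp]
    rw [Asymptotics.isLittleO_iff]
    intro ε hε
    filter_upwards [Metric.ball_mem_nhds (0:EuclideanSpace ℝ (Fin d))
      (show (0:ℝ) < ε/(1+lam*t) by positivity)] with h hh
    rw [Metric.mem_ball, dist_zero_right] at hh
    have hb := hbound h
    have htd : (InnerProductSpace.toDual ℝ (EuclideanSpace ℝ (Fin d)) (T y)) h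
        = ⟪T y, h⟫ := InnerProductSpace.toDual_apply_apply
    rw [Real.norm_eq_abs, htd]
    have h9 : (1+lam*t)*‖h‖ ≤ ε := by
      rw [lt_div_iff₀ hc] at hh
      nlinarith [hh]
    have h8 : (1+lam*t)*‖h‖^2 ≤ ε * ‖h‖ := by
      nlinarith [h9, norm_nonneg h]
    calc |conj f (y+h) - conj f y - ⟪T y, h⟫| ≤ (1+lam*t)*‖h‖^2 := hb
      _ ≤ ε * ‖h‖ := h8
  have hgrad : ∀ y, gradient (conj f) y = T y := fun y => (hgradAt y).gradient
  refine ⟨fun y => (hgradAt y).differentiableAt, ?_, ?_, ?_, ?_⟩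
  · have heq : (fun y => gradient (conj f) y) = T := funext hgrad
    rw [heq]
    apply LipschitzWith.continuous (K := Real.toNNReal (1+lam*t))
    apply LipschitzWith.of_dist_le_mul
    intro a b
    rw [dist_eq_norm, dist_eq_norm, Real.coe_toNNReal _ hc.le]
    exact hlipT a b
  · intro x
    obtain ⟨y, hy⟩ := hsub x
    refine ⟨y, ?_⟩
    show gradient (conj f) y = x
    rw [hgrad y]
    apply huniq
    intro z
    have := hy z
    rw [inner_sub_right] at this
    linarith
  · intro x y
    rw [hgrad y]
    constructor
    · intro hxy z
      rw [← hxy]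
      have := hT y z
      rw [ge_iff_le, inner_sub_right]
      linarith
    · intro hs
      apply huniq
      intro z
      have := hs z
      rw [ge_iff_le, inner_sub_right] at this
      linarith
  · intro y₁ y₂
    rw [hgrad y₁, hgrad y₂]
    exact hlipT y₁ y₂
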